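/- Suppose that for every positive integer n there exists a prime q and an integer p, with p = 1 or p a prime less than 2n+1, such that 2n = q - p. Then for every n ≥ 1 the ladder graph P_n × P_2 has a prime labeling. -/

import Mathlib

/-- Adjacency in the ladder graph `P_n × P_2`: vertices are pairs (column, row). -/
def ladderAdj (n : ℕ) (v w : Fin n × Fin 2) : Prop :=
  (v.2 = w.2 ∧ ((v.1 : ℕ) + 1 = (w.1 : ℕ) ∨ (w.1 : ℕ) + 1 = (v.1 : ℕ))) ∨
  (v.1 = w.1 ∧ v.2 ≠ w.2)

private lemma coprime_of_add_prime' {x y s : ℕ} (hs : Nat.Prime s) (hxy : x + y = s)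
    (hx : 0 < x) (hy : 0 < y) : Nat.Coprime x y := by
  have hd : Nat.gcd x y ∣ s := by
    rw [← hxy]; exact Nat.dvd_add (Nat.gcd_dvd_left x y) (Nat.gcd_dvd_right x y)
  rcases hs.eq_one_or_self_of_dvd _ hd with h1 | h1
  · exact h1
  · have h2 := Nat.le_of_dvd hx (Nat.gcd_dvd_left x y)
    omega

private lemma coprime_cycle_succ' {m : ℕ} (hm : 2 ≤ m) (a : ℕ) :
    Nat.Coprime (a % m + 1) ((a + 1) % m + 1) := by
  have h0 : 0 < m := by omega
  have hlt := Nat.mod_lt a h0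
  have hmod : (a + 1) % m = (a % m + 1) % m := by
    conv_lhs => rw [Nat.add_mod]
    rw [Nat.mod_eq_of_lt (show 1 < m by omega)]
  rcases Nat.lt_or_ge (a % m + 1) m with hc | hc
  · rw [hmod, Nat.mod_eq_of_lt hc]
    simp
  · have hr : a % m = m - 1 := by omega
    have hz : (a % m + 1) % m = 0 := by
      rw [hr, Nat.sub_add_cancel (by omega)]
      simp
    rw [hmod, hz]
    exact Nat.coprime_one_right _

theorem stmt_9
    (h : ∀ n : ℕ, 0 < n → ∃ q p : ℕ, Nat.Prime q ∧
      (p = 1 ∨ (Nat.Prime p ∧ p < 2 * n + 1)) ∧ 2 * n + p = q) :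
    ∀ n : ℕ, 1 ≤ n → ∃ f : Fin n × Fin 2 → ℕ,
      Set.BijOn f Set.univ (Set.Icc 1 (2 * n)) ∧
      ∀ v w, ladderAdj n v w → Nat.Coprime (f v) (f w) := by
  intro n hn
  obtain ⟨q, p, hq, hp, hpq⟩ := h n hn
  have hq2 := hq.two_le
  have hp1 : 1 ≤ p := by
    rcases hp with h1 | ⟨hp', _⟩
    · omega
    · have := hp'.two_le; omega
  have hq3 : 3 ≤ q := by omega
  have hqodd : q % 2 = 1 := by
    rcases hq.eq_two_or_odd with h2 | h2 <;> omega
  have hpodd : p % 2 = 1 := by omega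
  have hplt : p ≤ 2 * n - 1 := by
    rcases hp with h1 | ⟨_, h2⟩ <;> omega
  set k := (p - 1) / 2 with hkdef
  have hpk : p = 2 * k + 1 := by omega
  have hkn : k + 1 ≤ n := by omega
  set m := 2 * n with hmdef
  have hm2 : 2 ≤ m := by omega
  set pos : Fin n × Fin 2 → ℕ :=
    fun v => if (v.2 : ℕ) = 0 then (v.1 : ℕ) else 2 * n - 1 - (v.1 : ℕ) with hpos
  have pos_lt : ∀ v : Fin n × Fin 2, pos v < m := by
    intro v
    have hv1 : (v.1 : ℕ) < n := v.1.isLt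
    simp only [hpos]
    split_ifs <;> omega
  have pos_inj : ∀ v w : Fin n × Fin 2, pos v = pos w → v = w := by
    intro v w hvw
    have hv1 : (v.1 : ℕ) < n := v.1.isLt
    have hw1 : (w.1 : ℕ) < n := w.1.isLt
    simp only [hpos] at hvw
    have hvals : (v.1 : ℕ) = (w.1 : ℕ) ∧ (v.2 : ℕ) = (w.2 : ℕ) := by
      have hv2 : (v.2 : ℕ) < 2 := v.2.isLt
      have hw2 : (w.2 : ℕ) < 2 := w.2.isLt
      split_ifs at hvw <;> omega
    exact Prod.ext (Fin.ext hvals.1) (Fin.ext hvals.2)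
  refine ⟨fun v => (pos v + k) % m + 1, ?_, ?_⟩
  · -- Bijectivity
    have hmaps : Set.MapsTo (fun v => (pos v + k) % m + 1) Set.univ (Set.Icc 1 m) := by
      intro v _
      have hlt := Nat.mod_lt (pos v + k) (show 0 < m by omega)
      show (pos v + k) % m + 1 ∈ Set.Icc 1 m
      rw [Set.mem_Icc]
      omega
    have hinj : Set.InjOn (fun v => (pos v + k) % m + 1) Set.univ := by
      intro v _ w _ hvw
      have hmod : (pos v + k) % m = (pos w + k) % m := Nat.succ_injective hvw
      have hb1 : pos v < m := pos_lt v
      have hb2 : pos w < m := pos_lt w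
      have heq : pos v = pos w := by
        rcases le_total (pos v + k) (pos w + k) with hle | hle
        · have hdvd : m ∣ (pos w + k) - (pos v + k) := (Nat.modEq_iff_dvd' hle).mp hmod
          have := Nat.eq_zero_of_dvd_of_lt hdvd
          rcases Nat.eq_zero_or_pos ((pos w + k) - (pos v + k)) with h0 | h0
          · omega
          · have := Nat.le_of_dvd h0 hdvd; omega
        · have hdvd : m ∣ (pos v + k) - (pos w + k) := (Nat.modEq_iff_dvd' hle).mp hmod.symm
          rcases Nat.eq_zero_or_pos ((pos v + k) - (pos w + k)) with h0 | h0
          · omega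
          · have := Nat.le_of_dvd h0 hdvd; omega
      exact pos_inj v w heq
    have hcardD : (Set.univ : Set (Fin n × Fin 2)).ncard = m := by
      rw [Set.ncard_univ]
      simp [Nat.card_eq_fintype_card]
      omega
    have hcardI : (Set.Icc 1 m).ncard = m := by
      simp [Set.ncard_eq_toFinset_card', Set.toFinset_Icc]
    have himg : (fun v => (pos v + k) % m + 1) '' Set.univ = Set.Icc 1 m := by
      apply Set.eq_of_subset_of_ncard_le (ht := Set.finite_Icc 1 m)
      · rintro x ⟨v, -, rfl⟩
        exact hmaps (Set.mem_univ v)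
      · rw [hcardI, Set.ncard_image_of_injOn hinj, hcardD]
    exact ⟨hmaps, hinj, himg ▸ Set.Subset.rfl⟩
  · -- Coprimality
    have step : ∀ a : ℕ, Nat.Coprime ((a + k) % m + 1) ((a + 1 + k) % m + 1) := by
      intro a
      have := coprime_cycle_succ' hm2 (a + k)
      simpa [show a + k + 1 = a + 1 + k by ring] using this
    have rung : ∀ i : ℕ, i < n →
        Nat.Coprime ((i + k) % m + 1) ((2 * n - 1 - i + k) % m + 1) := by
      intro i hi
      have h1 : (i + k) % m = i + k := Nat.mod_eq_of_lt (by omega)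
      rcases Nat.lt_or_ge i k with hik | hik
      · have e1 : 2 * n - 1 - i + k = m + (k - i - 1) := by omega
        have hb : (2 * n - 1 - i + k) % m = k - i - 1 := by
          rw [e1, Nat.add_mod_left]
          exact Nat.mod_eq_of_lt (by omega)
        rw [h1, hb]
        have hpprime : Nat.Prime p := by
          rcases hp with h1' | ⟨h1', _⟩
          · exact absurd hik (by omega)
          · exact h1'
        exact coprime_of_add_prime' hpprime (by omega) (by omega) (by omega)
      · have hb : (2 * n - 1 - i + k) % m = 2 * n - 1 - i + k :=
          Nat.mod_eq_of_lt (by omega)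
        rw [h1, hb]
        exact coprime_of_add_prime' hq (by omega) (by omega) (by omega)
    intro v w hadj
    have hv1 : (v.1 : ℕ) < n := v.1.isLt
    have hw1 : (w.1 : ℕ) < n := w.1.isLt
    show Nat.Coprime ((pos v + k) % m + 1) ((pos w + k) % m + 1)
    rcases hadj with ⟨hrow, hcol⟩ | ⟨hcol, hrow⟩
    · -- rail edge
      have h2 : (v.2 : ℕ) = (w.2 : ℕ) := by rw [hrow]
      have hdisj : pos v + 1 = pos w ∨ pos w + 1 = pos v := by
        simp only [hpos]
        split_ifs <;> rcases hcol with hc | hc <;> omega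
      rcases hdisj with hd | hd
      · rw [← hd]; exact step (pos v)
      · rw [← hd]; exact (step (pos w)).symm
    · -- rung edge
      have hcol' : (v.1 : ℕ) = (w.1 : ℕ) := by rw [hcol]
      have h2 : (v.2 : ℕ) ≠ (w.2 : ℕ) := fun he => hrow (Fin.ext he)
      have hv0 : (v.2 : ℕ) = 0 ∨ (v.2 : ℕ) = 1 := by omega
      have hw0 : (w.2 : ℕ) = 0 ∨ (w.2 : ℕ) = 1 := by omega
      rcases hv0 with h0 | h0 <;> rcases hw0 with h1 | h1
      · exact absurd (h0.trans h1.symm) h2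
      · have ev : pos v = (v.1 : ℕ) := by rw [hpos]; exact if_pos h0
        have ew : pos w = 2 * n - 1 - (w.1 : ℕ) := by rw [hpos]; exact if_neg (by omega)
        rw [ev, ew, hcol']
        exact rung (w.1 : ℕ) hw1
      · have ev : pos v = 2 * n - 1 - (v.1 : ℕ) := by rw [hpos]; exact if_neg (by omega)
        have ew : pos w = (w.1 : ℕ) := by rw [hpos]; exact if_pos h1
        rw [ev, ew, ← hcol']
        exact (rung (v.1 : ℕ) hv1).symm
      · exact absurd (h0.trans h1.symm) h2
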